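/- arXiv:0802.4248 — 2 statements merged into one kernel-verified Lean document; each statement's English description precedes it below -/
import Mathlib

section
/- Two qubit effects A and B (parametrized as below) are coexistent if and only if there exist γ ∈ ℝ and g ∈ ℝ³ satisfying the four inequalities ‖g‖ ≤ γ, ‖a − g‖ ≤ α − γ, ‖b − g‖ ≤ β − γ, and ‖a + b − g‖ ≤ 2 + γ − α − β. -/
open scoped ComplexOrder RealInnerProductSpace
open scoped Matrix

/-- The vector of Pauli matrices contracted with a real 3-vector: `v · σ`. -/
noncomputable def pauli (v : EuclideanSpace ℝ (Fin 3)) : Matrix (Fin 2) (Fin 2) ℂ :=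
  (v 0 : ℂ) • !![0, 1; 1, 0] + (v 1 : ℂ) • !![0, -Complex.I; Complex.I, 0] +
    (v 2 : ℂ) • !![1, 0; 0, -1]

/-- The qubit effect `(1/2)(α·1 + v·σ)`. -/
noncomputable def qubitEffect (α : ℝ) (v : EuclideanSpace ℝ (Fin 3)) :
    Matrix (Fin 2) (Fin 2) ℂ :=
  (1 / 2 : ℂ) • ((α : ℂ) • (1 : Matrix (Fin 2) (Fin 2) ℂ) + pauli v)

lemma qubitEffect_eq (γ : ℝ) (g : EuclideanSpace ℝ (Fin 3)) :
    qubitEffect γ g = !![(((γ + g 2)/2 : ℝ) : ℂ), ((g 0 : ℝ) - (g 1 : ℝ)*Complex.I)/2;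
      ((g 0 : ℝ) + (g 1 : ℝ)*Complex.I)/2, (((γ - g 2)/2 : ℝ) : ℂ)] := by
  unfold qubitEffect pauli
  ext i j
  fin_cases i <;> fin_cases j <;>
    simp [Matrix.one_apply] <;> push_cast <;> ring

lemma qubitEffect_add (γ δ : ℝ) (g h : EuclideanSpace ℝ (Fin 3)) :
    qubitEffect γ g + qubitEffect δ h = qubitEffect (γ + δ) (g + h) := by
  simp only [qubitEffect_eq]
  ext i j
  fin_cases i <;> fin_cases j <;>
    simp [PiLp.add_apply] <;> push_cast <;> ring

lemma qubitEffect_one : qubitEffect 2 0 = 1 := by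
  rw [qubitEffect_eq]
  ext i j
  fin_cases i <;> fin_cases j <;> simp [Matrix.one_apply] <;> norm_num

lemma norm_euclidean (g : EuclideanSpace ℝ (Fin 3)) :
    ‖g‖ = Real.sqrt (g 0 ^ 2 + g 1 ^ 2 + g 2 ^ 2) := by
  rw [EuclideanSpace.norm_eq]
  simp [Fin.sum_univ_three, sq_abs]

set_option maxHeartbeats 1600000 in
lemma posSemidef_qubitEffect_iff (γ : ℝ) (g : EuclideanSpace ℝ (Fin 3)) :
    (qubitEffect γ g).PosSemidef ↔ ‖g‖ ≤ γ := by
  rw [norm_euclidean]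
  constructor
  · intro h
    have hγ2 : (0:ℂ) ≤ star (![1,0] : Fin 2 → ℂ) ⬝ᵥ (qubitEffect γ g) *ᵥ ![1,0] := h.dotProduct_mulVec_nonneg _
    have hγ2' : (0:ℂ) ≤ star (![0,1] : Fin 2 → ℂ) ⬝ᵥ (qubitEffect γ g) *ᵥ ![0,1] := h.dotProduct_mulVec_nonneg _
    rw [qubitEffect_eq] at hγ2 hγ2'
    simp [dotProduct, Matrix.mulVec, Fin.sum_univ_two, Complex.le_def] at hγ2 hγ2'
    have hγ : 0 ≤ γ := by linarith
    have hdet : 0 ≤ ((qubitEffect γ g).det).re := by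
      rw [h.1.det_eq_prod_eigenvalues]
      norm_cast
      have hp : 0 ≤ ∏ i, h.1.eigenvalues i := Finset.prod_nonneg fun i _ => h.eigenvalues_nonneg i
      simpa using hp
    rw [qubitEffect_eq, Matrix.det_fin_two_of] at hdet
    simp [Complex.le_def, Complex.mul_re, Complex.sub_re] at hdet
    have h2 : g 0 ^ 2 + g 1 ^ 2 + g 2 ^ 2 ≤ γ ^ 2 := by nlinarith [hdet]
    calc Real.sqrt (g 0 ^ 2 + g 1 ^ 2 + g 2 ^ 2) ≤ Real.sqrt (γ ^ 2) := Real.sqrt_le_sqrt h2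
      _ = γ := by rw [Real.sqrt_sq hγ]
  · intro hg
    have hγ : 0 ≤ γ := le_trans (Real.sqrt_nonneg _) hg
    have h2 : g 0 ^ 2 + g 1 ^ 2 + g 2 ^ 2 ≤ γ ^ 2 := by
      have := Real.sqrt_le_sqrt (le_of_eq (Real.sq_sqrt (by positivity : (0:ℝ) ≤ g 0 ^ 2 + g 1 ^ 2 + g 2 ^ 2)).symm)
      nlinarith [Real.sq_sqrt (by positivity : (0:ℝ) ≤ g 0 ^ 2 + g 1 ^ 2 + g 2 ^ 2), hg, Real.sqrt_nonneg (g 0 ^ 2 + g 1 ^ 2 + g 2 ^ 2)]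
    apply Matrix.PosSemidef.of_dotProduct_mulVec_nonneg
    · rw [qubitEffect_eq]
      unfold Matrix.IsHermitian
      ext i j
      fin_cases i <;> fin_cases j <;>
        simp [Matrix.conjTranspose_apply, Complex.ext_iff]
    · intro x
      rw [qubitEffect_eq]
      simp only [dotProduct, Matrix.mulVec, Fin.sum_univ_two]
      rw [Complex.le_def]
      constructor
      · simp [Complex.add_re, Complex.mul_re, Complex.mul_im, Complex.add_im, Complex.div_re, Complex.div_im, Complex.normSq]
        have hn : (0:ℝ) ≤ ((x 0).re)^2+((x 0).im)^2+((x 1).re)^2+((x 1).im)^2 := by positivity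
        have hCS : (g 2*(((x 0).re)^2+((x 0).im)^2-((x 1).re)^2-((x 1).im)^2) + 2*g 0*(((x 0).re)*((x 1).re)+((x 0).im)*((x 1).im)) + 2*g 1*(((x 0).re)*((x 1).im)-((x 0).im)*((x 1).re)))^2
            ≤ (g 0^2+g 1^2+g 2^2)*(((x 0).re)^2+((x 0).im)^2+((x 1).re)^2+((x 1).im)^2)^2 := by
          nlinarith [sq_nonneg (g 2*(2*(((x 0).re)*((x 1).re)+((x 0).im)*((x 1).im))) - g 0*(((x 0).re)^2+((x 0).im)^2-((x 1).re)^2-((x 1).im)^2)),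
            sq_nonneg (g 2*(2*(((x 0).re)*((x 1).im)-((x 0).im)*((x 1).re))) - g 1*(((x 0).re)^2+((x 0).im)^2-((x 1).re)^2-((x 1).im)^2)),
            sq_nonneg (g 0*(2*(((x 0).re)*((x 1).im)-((x 0).im)*((x 1).re))) - g 1*(2*(((x 0).re)*((x 1).re)+((x 0).im)*((x 1).im))))]
        have h2n : (g 0^2+g 1^2+g 2^2)*(((x 0).re)^2+((x 0).im)^2+((x 1).re)^2+((x 1).im)^2)^2 ≤ γ^2*(((x 0).re)^2+((x 0).im)^2+((x 1).re)^2+((x 1).im)^2)^2 :=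
          mul_le_mul_of_nonneg_right h2 (by positivity)
        nlinarith [hCS, h2n, mul_nonneg hγ hn]
      · simp [Complex.add_im, Complex.add_re, Complex.mul_re, Complex.mul_im, Complex.div_re, Complex.div_im, Complex.normSq]
        ring

lemma qubitEffect_sub (γ δ : ℝ) (g h : EuclideanSpace ℝ (Fin 3)) :
    qubitEffect γ g - qubitEffect δ h = qubitEffect (γ - δ) (g - h) := by
  simp only [qubitEffect_eq]
  ext i j
  fin_cases i <;> fin_cases j <;>
    simp [PiLp.sub_apply] <;> push_cast <;> ring

lemma herm_rep {M : Matrix (Fin 2) (Fin 2) ℂ} (hM : M.IsHermitian) :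
    M = qubitEffect ((M 0 0).re + (M 1 1).re)
      (WithLp.toLp 2 ![2*(M 0 1).re, -2*(M 0 1).im, (M 0 0).re - (M 1 1).re]) := by
  have h00 : (M 0 0).im = 0 := by
    have := congrFun (congrFun hM 0) 0
    simp [Matrix.conjTranspose_apply, Complex.ext_iff] at this
    linarith
  have h11 : (M 1 1).im = 0 := by
    have := congrFun (congrFun hM 1) 1
    simp [Matrix.conjTranspose_apply, Complex.ext_iff] at this
    linarith
  have h10 : M 1 0 = starRingEnd ℂ (M 0 1) := by
    have := congrFun (congrFun hM 0) 1
    simp [Matrix.conjTranspose_apply] at this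
    rw [← this, Complex.conj_conj]
  rw [qubitEffect_eq]
  ext i j
  fin_cases i <;> fin_cases j <;>
    simp [Complex.ext_iff, h00, h11, h10, Matrix.cons_val_zero, Matrix.cons_val_one] <;> ring

/-- Effects `A` and `B` are coexistent: there is a four-outcome POVM `(G₁,G₂,G₃,G₄)`
with `A = G₁ + G₂` and `B = G₁ + G₃`. -/
def Coexistent (A B : Matrix (Fin 2) (Fin 2) ℂ) : Prop :=
  ∃ G₁ G₂ G₃ G₄ : Matrix (Fin 2) (Fin 2) ℂ,
    G₁.PosSemidef ∧ G₂.PosSemidef ∧ G₃.PosSemidef ∧ G₄.PosSemidef ∧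
    G₁ + G₂ + G₃ + G₄ = 1 ∧ A = G₁ + G₂ ∧ B = G₁ + G₃

theorem coexistent_iff_four_balls (α β : ℝ) (a b : EuclideanSpace ℝ (Fin 3))
    (hαa : ‖a‖ ≤ α) (hα : α ≤ 2 - ‖a‖) (hβb : ‖b‖ ≤ β) (hβ : β ≤ 2 - ‖b‖) :
    Coexistent (qubitEffect α a) (qubitEffect β b) ↔
      ∃ (γ : ℝ) (g : EuclideanSpace ℝ (Fin 3)),
        ‖g‖ ≤ γ ∧ ‖a - g‖ ≤ α - γ ∧ ‖b - g‖ ≤ β - γ ∧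
        ‖a + b - g‖ ≤ 2 + γ - α - β := by
  constructor
  · rintro ⟨G₁, G₂, G₃, G₄, h1, h2, h3, h4, hsum, hA, hB⟩
    set γ : ℝ := (G₁ 0 0).re + (G₁ 1 1).re with hγdef
    set g : EuclideanSpace ℝ (Fin 3) :=
      WithLp.toLp 2 ![2*(G₁ 0 1).re, -2*(G₁ 0 1).im, (G₁ 0 0).re - (G₁ 1 1).re] with hgdef
    have hG1 : G₁ = qubitEffect γ g := herm_rep h1.1
    refine ⟨γ, g, (posSemidef_qubitEffect_iff γ g).1 (hG1 ▸ h1), ?_, ?_, ?_⟩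
    · have hG2 : G₂ = qubitEffect (α - γ) (a - g) := by
        rw [← qubitEffect_sub, ← hG1, hA]; abel
      exact (posSemidef_qubitEffect_iff _ _).1 (hG2 ▸ h2)
    · have hG3 : G₃ = qubitEffect (β - γ) (b - g) := by
        rw [← qubitEffect_sub, ← hG1, hB]; abel
      exact (posSemidef_qubitEffect_iff _ _).1 (hG3 ▸ h3)
    · have hG4 : G₄ = qubitEffect (2 + γ - α - β) (g - (a + b)) := by
        have e1 : G₄ = 1 - qubitEffect α a - qubitEffect β b + qubitEffect γ g := by
          rw [hA, hB, ← hsum, ← hG1]; abel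
        rw [e1, ← qubitEffect_one, qubitEffect_sub, qubitEffect_sub, qubitEffect_add,
          show (0:EuclideanSpace ℝ (Fin 3)) - a - b + g = g - (a + b) by abel,
          show 2 - α - β + γ = 2 + γ - α - β by ring]
      have := (posSemidef_qubitEffect_iff _ _).1 (hG4 ▸ h4)
      rwa [norm_sub_rev] at this
  · rintro ⟨γ, g, k1, k2, k3, k4⟩
    refine ⟨qubitEffect γ g, qubitEffect (α - γ) (a - g), qubitEffect (β - γ) (b - g),
      qubitEffect (2 + γ - α - β) (g - (a + b)),
      (posSemidef_qubitEffect_iff _ _).2 k1,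
      (posSemidef_qubitEffect_iff _ _).2 k2,
      (posSemidef_qubitEffect_iff _ _).2 k3,
      (posSemidef_qubitEffect_iff _ _).2 (by rwa [norm_sub_rev]), ?_, ?_, ?_⟩
    · rw [qubitEffect_add, qubitEffect_add, qubitEffect_add,
        show γ + (α - γ) + (β - γ) + (2 + γ - α - β) = 2 by ring,
        show g + (a - g) + (b - g) + (g - (a + b)) = 0 by abel, qubitEffect_one]
    · rw [qubitEffect_add, show γ + (α - γ) = α by ring, show g + (a - g) = a by abel]
    · rw [qubitEffect_add, show γ + (β - γ) = β by ring, show g + (b - g) = b by abel]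
end

section
/- Let A = (α/2)(1 + n·σ) and B = (β/2)(1 + m·σ) be scalar multiples of rank-one projections on ℂ² (n, m unit vectors in ℝ³, 0 < α, β ≤ 1, n ≠ ±m). Then A and B are coexistent if and only if αβ n·m ≤ 2 − 2α − 2β + αβ. -/
open scoped ComplexOrder RealInnerProductSpace

open Matrix

section Aux

lemma qE00 (α : ℝ) (n : EuclideanSpace ℝ (Fin 3)) :
    qubitEffect α (α • n) 0 0 = ((α*(1 + n 2)/2 : ℝ) : ℂ) := by
  simp [qubitEffect, pauli]; ring
lemma qE01 (α : ℝ) (n : EuclideanSpace ℝ (Fin 3)) :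
    qubitEffect α (α • n) 0 1 = ((α * n 0/2 : ℝ) : ℂ) + ((-(α * n 1)/2 : ℝ) : ℂ) * Complex.I := by
  simp [qubitEffect, pauli]; push_cast; ring
lemma qE10 (α : ℝ) (n : EuclideanSpace ℝ (Fin 3)) :
    qubitEffect α (α • n) 1 0 = ((α * n 0/2 : ℝ) : ℂ) - ((-(α * n 1)/2 : ℝ) : ℂ) * Complex.I := by
  simp [qubitEffect, pauli]; push_cast; ring
lemma qE11 (α : ℝ) (n : EuclideanSpace ℝ (Fin 3)) :
    qubitEffect α (α • n) 1 1 = ((α*(1 - n 2)/2 : ℝ) : ℂ) := by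
  simp [qubitEffect, pauli]; ring

/-- A 2×2 Hermitian matrix with nonnegative diagonal and nonnegative determinant is PSD. -/
lemma herm_psd (p q x y : ℝ) (hp : 0 ≤ p) (hq : 0 ≤ q) (h : x^2 + y^2 ≤ p*q)
    (M : Matrix (Fin 2) (Fin 2) ℂ) (h00 : M 0 0 = (p:ℂ)) (h01 : M 0 1 = (x:ℂ) + (y:ℂ)*Complex.I)
    (h10 : M 1 0 = (x:ℂ) - (y:ℂ)*Complex.I) (h11 : M 1 1 = (q:ℂ)) : M.PosSemidef := by
  refine Matrix.posSemidef_iff_dotProduct_mulVec.mpr ⟨?_, ?_⟩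
  · ext i j
    fin_cases i <;> fin_cases j <;>
      simp [Matrix.conjTranspose_apply, h00, h01, h10, h11, Complex.ext_iff]
  · intro v
    have hv : dotProduct (star v) (M *ᵥ v) =
        (starRingEnd ℂ) (v 0) * (M 0 0 * v 0 + M 0 1 * v 1) +
        (starRingEnd ℂ) (v 1) * (M 1 0 * v 0 + M 1 1 * v 1) := by
      simp [dotProduct, Matrix.mulVec, Fin.sum_univ_two, Pi.star_apply]
    rw [hv, h00, h01, h10, h11]
    rw [Complex.le_def]
    set a := (v 0).re; set b := (v 0).im; set d := (v 1).re; set e := (v 1).im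
    constructor
    · simp only [Complex.add_re, Complex.mul_re, Complex.conj_re, Complex.conj_im,
        Complex.add_im, Complex.mul_im, Complex.sub_re, Complex.sub_im, Complex.I_re,
        Complex.I_im, Complex.ofReal_re, Complex.ofReal_im, Complex.zero_re, Complex.zero_im]
      have key : (x*(a*d+b*e) + y*(b*d-a*e))^2 ≤ (x^2+y^2)*((a^2+b^2)*(d^2+e^2)) := by
        nlinarith [sq_nonneg (x*(b*d-a*e) - y*(a*d+b*e))]
      have h2 : (x^2+y^2)*((a^2+b^2)*(d^2+e^2)) ≤ p*q*((a^2+b^2)*(d^2+e^2)) := by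
        apply mul_le_mul_of_nonneg_right h
        positivity
      nlinarith [key, h2, sq_nonneg (p*(a^2+b^2) - q*(d^2+e^2)), mul_nonneg hp (sq_nonneg a),
        mul_nonneg hp (sq_nonneg b), mul_nonneg hq (sq_nonneg d), mul_nonneg hq (sq_nonneg e),
        sq_nonneg (p*(a^2+b^2) + q*(d^2+e^2) + 2*(x*(a*d+b*e) + y*(b*d-a*e)))]
    · simp only [Complex.add_re, Complex.mul_re, Complex.conj_re, Complex.conj_im,
        Complex.add_im, Complex.mul_im, Complex.sub_re, Complex.sub_im, Complex.I_re,
        Complex.I_im, Complex.ofReal_re, Complex.ofReal_im, Complex.zero_re, Complex.zero_im]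
      ring

/-- PSD 2×2 matrices have nonnegative (real part of the) determinant. -/
lemma psd_det {M : Matrix (Fin 2) (Fin 2) ℂ} (h : M.PosSemidef) :
    0 ≤ (M 0 0 * M 1 1 - M 0 1 * M 1 0).re := by
  have hd := h.det_nonneg
  rw [Matrix.det_fin_two] at hd
  simpa using (Complex.le_def.mp hd).1

/-- An explicit kernel vector for the rank-one effect `qubitEffect α (α • n)`. -/
noncomputable def vker (n : EuclideanSpace ℝ (Fin 3)) : Fin 2 → ℂ :=
  if n 2 = 1 then ![0, 1] else ![((n 2 - 1 : ℝ) : ℂ), (n 0 : ℂ) + (n 1 : ℂ) * Complex.I]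

lemma vker_ker (α : ℝ) (n : EuclideanSpace ℝ (Fin 3)) (hn : n 0^2 + n 1^2 + n 2^2 = 1) :
    qubitEffect α (α • n) *ᵥ vker n = 0 := by
  have hc : (n 0 : ℂ)^2 + (n 1 : ℂ)^2 + (n 2 : ℂ)^2 = 1 := by
    have := congrArg (fun x : ℝ => (x : ℂ)) hn; push_cast at this; exact this
  ext i
  by_cases h : n 2 = 1
  · have h0 : n 0 = 0 := by nlinarith [sq_nonneg (n 0), sq_nonneg (n 1)]
    have h1 : n 1 = 0 := by nlinarith [sq_nonneg (n 0), sq_nonneg (n 1)]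
    fin_cases i <;>
      simp [vker, h, qubitEffect, pauli, Matrix.mulVec, dotProduct, Fin.sum_univ_two, h0, h1]
  · fin_cases i
    · simp [vker, if_neg h, qubitEffect, pauli, Matrix.mulVec, dotProduct,
        Fin.sum_univ_two]
      linear_combination ((α : ℂ)/2) * hc + ((α:ℂ) * (n 1:ℂ)^2 * (-1/2)) * Complex.I_sq
    · simp [vker, if_neg h, qubitEffect, pauli, Matrix.mulVec, dotProduct,
        Fin.sum_univ_two]
      ring_nf

lemma vker_det (n m : EuclideanSpace ℝ (Fin 3))
    (hn : n 0^2 + n 1^2 + n 2^2 = 1) (hm : m 0^2 + m 1^2 + m 2^2 = 1) (hnm : n ≠ m) :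
    vker n 0 * vker m 1 - vker m 0 * vker n 1 ≠ 0 := by
  by_cases h1 : n 2 = 1 <;> by_cases h2 : m 2 = 1
  · exfalso
    apply hnm
    have hn0 : n 0 = 0 := by nlinarith [sq_nonneg (n 0), sq_nonneg (n 1)]
    have hn1 : n 1 = 0 := by nlinarith [sq_nonneg (n 0), sq_nonneg (n 1)]
    have hm0 : m 0 = 0 := by nlinarith [sq_nonneg (m 0), sq_nonneg (m 1)]
    have hm1 : m 1 = 0 := by nlinarith [sq_nonneg (m 0), sq_nonneg (m 1)]
    ext i
    fin_cases i <;> simp [hn0, hn1, hm0, hm1, h1, h2]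
  · simp only [vker, if_pos h1, if_neg h2]
    intro hc
    apply h2
    simp only [Matrix.cons_val_zero, Matrix.cons_val_one, Matrix.head_cons] at hc
    have : ((m 2 - 1 : ℝ) : ℂ) = 0 := by linear_combination -hc
    have := Complex.ofReal_eq_zero.mp this
    linarith
  · simp only [vker, if_neg h1, if_pos h2]
    intro hc
    apply h1
    simp only [Matrix.cons_val_zero, Matrix.cons_val_one, Matrix.head_cons] at hc
    have : ((n 2 - 1 : ℝ) : ℂ) = 0 := by linear_combination hc
    have := Complex.ofReal_eq_zero.mp this
    linarith
  · simp only [vker, if_neg h1, if_neg h2]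
    intro hc
    simp only [Matrix.cons_val_zero, Matrix.cons_val_one, Matrix.head_cons] at hc
    have hre := congrArg Complex.re hc
    have him := congrArg Complex.im hc
    simp [Complex.add_re, Complex.add_im, Complex.mul_re, Complex.mul_im] at hre him
    -- hre : (n 2 - 1)*m 0 - n 0*(m 2 - 1) = 0 (roughly), him for the 1-components
    have hn2 : n 2 < 1 := lt_of_le_of_ne (by nlinarith [sq_nonneg (n 0), sq_nonneg (n 1)]) h1
    have hm2 : m 2 < 1 := lt_of_le_of_ne (by nlinarith [sq_nonneg (m 0), sq_nonneg (m 1)]) h2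
    have e1 : (1 - n 2) * m 0 = (1 - m 2) * n 0 := by linarith [hre]
    have e2 : (1 - n 2) * m 1 = (1 - m 2) * n 1 := by linarith [him]
    have h3 : ((1 - n 2)*(1 - m 2)) * ((1 - m 2)*(1 + n 2))
        = ((1 - n 2)*(1 - m 2)) * ((1 - n 2)*(1 + m 2)) := by
      linear_combination (-((1-m 2)*n 0 + (1-n 2)*m 0)) * e1
        + (-((1-m 2)*n 1 + (1-n 2)*m 1)) * e2 + (-(1-m 2)^2) * hn + ((1-n 2)^2) * hm
    have hpos : (0:ℝ) < (1 - n 2)*(1 - m 2) := by nlinarith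
    have h4 : (1 - m 2)*(1 + n 2) = (1 - n 2)*(1 + m 2) := mul_left_cancel₀ (ne_of_gt hpos) h3
    have h5 : n 2 = m 2 := by linear_combination h4/2
    rw [← h5] at e1 e2
    have hne : (1 - n 2) ≠ 0 := by linarith
    have h6 : m 0 = n 0 := mul_left_cancel₀ hne e1
    have h7 : m 1 = n 1 := mul_left_cancel₀ hne e2
    exact hnm (PiLp.ext fun i => by fin_cases i <;> simp [h5, h6.symm, h7.symm])

end Aux

set_option maxHeartbeats 1600000 in
theorem projection_multiples_coexistence (α β : ℝ) (n m : EuclideanSpace ℝ (Fin 3))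
    (hn : ‖n‖ = 1) (hm : ‖m‖ = 1) (hnm : n ≠ m) (hnm' : n ≠ -m)
    (hα0 : 0 < α) (hα1 : α ≤ 1) (hβ0 : 0 < β) (hβ1 : β ≤ 1) :
    Coexistent (qubitEffect α (α • n)) (qubitEffect β (β • m)) ↔
      α * β * ⟪n, m⟫ ≤ 2 - 2 * α - 2 * β + α * β := by
  have hn' : n 0^2 + n 1^2 + n 2^2 = 1 := by
    have h := real_inner_self_eq_norm_sq n
    rw [hn] at h
    simp only [PiLp.inner_apply, Fin.sum_univ_three, RCLike.inner_apply, conj_trivial] at h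
    nlinarith [h]
  have hm' : m 0^2 + m 1^2 + m 2^2 = 1 := by
    have h := real_inner_self_eq_norm_sq m
    rw [hm] at h
    simp only [PiLp.inner_apply, Fin.sum_univ_three, RCLike.inner_apply, conj_trivial] at h
    nlinarith [h]
  have hn2a : n 2 ≤ 1 := by nlinarith [sq_nonneg (n 0), sq_nonneg (n 1)]
  have hn2b : -1 ≤ n 2 := by nlinarith [sq_nonneg (n 0), sq_nonneg (n 1)]
  have hm2a : m 2 ≤ 1 := by nlinarith [sq_nonneg (m 0), sq_nonneg (m 1)]
  have hm2b : -1 ≤ m 2 := by nlinarith [sq_nonneg (m 0), sq_nonneg (m 1)]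
  have hinner : ⟪n, m⟫ = n 0 * m 0 + n 1 * m 1 + n 2 * m 2 := by
    simp only [PiLp.inner_apply, Fin.sum_univ_three, RCLike.inner_apply, conj_trivial]; ring
  rw [hinner]
  set A := qubitEffect α (α • n) with hAdef
  set B := qubitEffect β (β • m) with hBdef
  -- entries of 1 - A - B
  have E00 : ((1:Matrix (Fin 2) (Fin 2) ℂ) - A - B) 0 0
      = (((2 - α - β - (α * n 2 + β * m 2))/2 : ℝ) : ℂ) := by
    simp [Matrix.sub_apply, Matrix.one_apply, hAdef, hBdef, qE00]
    push_cast; ring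
  have E01 : ((1:Matrix (Fin 2) (Fin 2) ℂ) - A - B) 0 1
      = (((-(α * n 0 + β * m 0))/2 : ℝ) : ℂ) + (((α * n 1 + β * m 1)/2 : ℝ) : ℂ) * Complex.I := by
    simp [Matrix.sub_apply, Matrix.one_apply, hAdef, hBdef, qE01]
    push_cast; ring
  have E10 : ((1:Matrix (Fin 2) (Fin 2) ℂ) - A - B) 1 0
      = (((-(α * n 0 + β * m 0))/2 : ℝ) : ℂ) - (((α * n 1 + β * m 1)/2 : ℝ) : ℂ) * Complex.I := by
    simp [Matrix.sub_apply, Matrix.one_apply, hAdef, hBdef, qE10]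
    push_cast; ring
  have E11 : ((1:Matrix (Fin 2) (Fin 2) ℂ) - A - B) 1 1
      = (((2 - α - β + (α * n 2 + β * m 2))/2 : ℝ) : ℂ) := by
    simp [Matrix.sub_apply, Matrix.one_apply, hAdef, hBdef, qE11]
    push_cast; ring
  constructor
  · rintro ⟨G₁, G₂, G₃, G₄, h1, h2, h3, h4, hsum, hA, hB⟩
    have hG2' : (A - G₁).PosSemidef := by rw [hA, add_sub_cancel_left]; exact h2
    have hG3' : (B - G₁).PosSemidef := by rw [hB, add_sub_cancel_left]; exact h3
    have hker1 : G₁ *ᵥ vker n = 0 := by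
      have hAv := vker_ker α n hn'
      have q1 := h1.dotProduct_mulVec_nonneg (vker n)
      have q2 := hG2'.dotProduct_mulVec_nonneg (vker n)
      have hz : dotProduct (star (vker n)) (G₁ *ᵥ vker n)
          + dotProduct (star (vker n)) ((A - G₁) *ᵥ vker n) = 0 := by
        rw [← dotProduct_add, ← Matrix.add_mulVec]
        have : G₁ + (A - G₁) = A := by abel
        rw [this, hAv, dotProduct_zero]
      have hz1 : dotProduct (star (vker n)) (G₁ *ᵥ vker n) = 0 :=
        le_antisymm ((le_add_of_nonneg_right q2).trans_eq hz) q1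
      exact (h1.dotProduct_mulVec_zero_iff _).mp hz1
    have hker2 : G₁ *ᵥ vker m = 0 := by
      have hBv := vker_ker β m hm'
      have q1 := h1.dotProduct_mulVec_nonneg (vker m)
      have q2 := hG3'.dotProduct_mulVec_nonneg (vker m)
      have hz : dotProduct (star (vker m)) (G₁ *ᵥ vker m)
          + dotProduct (star (vker m)) ((B - G₁) *ᵥ vker m) = 0 := by
        rw [← dotProduct_add, ← Matrix.add_mulVec]
        have : G₁ + (B - G₁) = B := by abel
        rw [this, hBv, dotProduct_zero]
      have hz1 : dotProduct (star (vker m)) (G₁ *ᵥ vker m) = 0 :=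
        le_antisymm ((le_add_of_nonneg_right q2).trans_eq hz) q1
      exact (h1.dotProduct_mulVec_zero_iff _).mp hz1
    set V : Matrix (Fin 2) (Fin 2) ℂ :=
      Matrix.of ![![vker n 0, vker m 0], ![vker n 1, vker m 1]] with hV
    have hGV : G₁ * V = 0 := by
      ext i j
      fin_cases j
      · have := congrFun hker1 i
        simp [Matrix.mul_apply, Matrix.mulVec, dotProduct, Fin.sum_univ_two, hV] at this ⊢
        linear_combination this
      · have := congrFun hker2 i
        simp [Matrix.mul_apply, Matrix.mulVec, dotProduct, Fin.sum_univ_two, hV] at this ⊢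
        linear_combination this
    have hdet : V.det ≠ 0 := by
      rw [Matrix.det_fin_two]
      have h := vker_det n m hn' hm' hnm
      simpa [hV] using h
    have hG10 : G₁ = 0 := by
      have h5 : G₁ * (V * V⁻¹) = 0 := by rw [← Matrix.mul_assoc, hGV, Matrix.zero_mul]
      rwa [Matrix.mul_nonsing_inv _ (isUnit_iff_ne_zero.mpr hdet), Matrix.mul_one] at h5
    have h4' : ((1:Matrix (Fin 2) (Fin 2) ℂ) - A - B).PosSemidef := by
      have hG4 : (1:Matrix (Fin 2) (Fin 2) ℂ) - A - B = G₄ := by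
        rw [hA, hB, hG10, ← hsum, hG10]; abel
      rw [hG4]; exact h4
    have hd := psd_det h4'
    have hval : ((1:Matrix (Fin 2) (Fin 2) ℂ) - A - B) 0 0 * ((1:Matrix (Fin 2) (Fin 2) ℂ) - A - B) 1 1
        - ((1:Matrix (Fin 2) (Fin 2) ℂ) - A - B) 0 1 * ((1:Matrix (Fin 2) (Fin 2) ℂ) - A - B) 1 0
        = ((((2 - α - β - (α * n 2 + β * m 2))/2) * ((2 - α - β + (α * n 2 + β * m 2))/2)
            - ((-(α * n 0 + β * m 0))/2)^2 - ((α * n 1 + β * m 1)/2)^2 : ℝ) : ℂ) := by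
      rw [E00, E01, E10, E11]
      push_cast
      linear_combination (((α * n 1 + β * m 1)/2 : ℂ))^2 * Complex.I_sq
    rw [hval] at hd
    simp only [Complex.ofReal_re] at hd
    nlinarith [hd, hn', hm', sq_nonneg α, sq_nonneg β]
  · intro hineq
    refine ⟨0, A, B, 1 - A - B, Matrix.PosSemidef.zero, ?_, ?_, ?_,
      by abel, (zero_add A).symm, (zero_add B).symm⟩
    · -- A PSD
      refine herm_psd (α*(1 + n 2)/2) (α*(1 - n 2)/2) (α * n 0/2) (-(α * n 1)/2)
        ?_ ?_ ?_ A (qE00 α n) (qE01 α n) (qE10 α n) (qE11 α n)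
      · exact div_nonneg (mul_nonneg hα0.le (by linarith)) (by norm_num)
      · exact div_nonneg (mul_nonneg hα0.le (by linarith)) (by norm_num)
      · have : (α * n 0/2)^2 + (-(α * n 1)/2)^2 = (α*(1 + n 2)/2)*(α*(1 - n 2)/2) := by
          linear_combination (α^2/4) * hn'
        exact le_of_eq this
    · -- B PSD
      refine herm_psd (β*(1 + m 2)/2) (β*(1 - m 2)/2) (β * m 0/2) (-(β * m 1)/2)
        ?_ ?_ ?_ B (qE00 β m) (qE01 β m) (qE10 β m) (qE11 β m)
      · exact div_nonneg (mul_nonneg hβ0.le (by linarith)) (by norm_num)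
      · exact div_nonneg (mul_nonneg hβ0.le (by linarith)) (by norm_num)
      · have : (β * m 0/2)^2 + (-(β * m 1)/2)^2 = (β*(1 + m 2)/2)*(β*(1 - m 2)/2) := by
          linear_combination (β^2/4) * hm'
        exact le_of_eq this
    · -- 1 - A - B PSD
      have hNa : α^2*(n 0^2 + n 1^2 + n 2^2) = α^2 := by rw [hn']; ring
      have hNb : β^2*(m 0^2 + m 1^2 + m 2^2) = β^2 := by rw [hm']; ring
      have h2ab : 0 ≤ 2 - α - β := by linarith
      have hs2 : (α*n 2 + β*m 2)^2 ≤ (2 - α - β)^2 := by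
        nlinarith [hineq, hNa, hNb, sq_nonneg (α*n 0 + β*m 0), sq_nonneg (α*n 1 + β*m 1)]
      refine herm_psd ((2 - α - β - (α * n 2 + β * m 2))/2) ((2 - α - β + (α * n 2 + β * m 2))/2)
        ((-(α * n 0 + β * m 0))/2) ((α * n 1 + β * m 1)/2) ?_ ?_ ?_ _ E00 E01 E10 E11
      · nlinarith [hs2, h2ab]
      · nlinarith [hs2, h2ab]
      · nlinarith [hineq, hNa, hNb]
end
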